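/- Fix real numbers p ∈ (0,1) and δ ∈ (0,1). Then the function B ↦ (p + (1 - p) δ^{1/B})^B is strictly decreasing on the interval (0, ∞) of real numbers B. -/
import Mathlib


/-- Fix `p ∈ (0,1)` and `δ ∈ (0,1)`. Then the function
`B ↦ (p + (1 - p) δ^(1/B))^B` is strictly decreasing on `(0, ∞)` (real powers). -/
theorem stmt5 (p δ : ℝ) (hp : p ∈ Set.Ioo (0:ℝ) 1) (hδ : δ ∈ Set.Ioo (0:ℝ) 1) :
    StrictAntiOn (fun B : ℝ => (p + (1 - p) * δ ^ (1/B)) ^ B) (Set.Ioi (0:ℝ)) := by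
  obtain ⟨hp0, hp1⟩ := hp
  obtain ⟨hδ0, hδ1⟩ := hδ
  intro B1 hB1 B2 hB2 hlt
  simp only [Set.mem_Ioi] at hB1 hB2
  set s : ℝ := B1 / B2 with hs
  have hs0 : 0 < s := div_pos hB1 hB2
  have hs1 : s < 1 := (div_lt_one hB2).2 hlt
  set y : ℝ := δ ^ (1 / B1) with hy
  have hy0 : 0 < y := Real.rpow_pos_of_pos hδ0 _
  have hy1 : y < 1 := Real.rpow_lt_one hδ0.le hδ1 (by positivity)
  have hconc := (Real.strictConcaveOn_rpow hs0 hs1).2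
    (Set.mem_Ici.2 zero_le_one) (Set.mem_Ici.2 hy0.le)
    hy1.ne' hp0 (by linarith : (0:ℝ) < 1 - p) (by ring)
  simp only [smul_eq_mul, Real.one_rpow, mul_one] at hconc
  -- hconc : p + (1-p) * y^s < (p + (1-p) * y)^s
  have hys : y ^ s = δ ^ (1 / B2) := by
    rw [hy, ← Real.rpow_mul hδ0.le]
    congr 1
    rw [hs]
    field_simp
  rw [hys] at hconc
  have hq : (0:ℝ) < 1 - p := by linarith
  have hbase : 0 < p + (1 - p) * y := by nlinarith
  have h2 : (p + (1 - p) * δ ^ (1 / B2)) ^ B2 < ((p + (1 - p) * y) ^ s) ^ B2 :=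
    Real.rpow_lt_rpow
    (by nlinarith [Real.rpow_pos_of_pos hδ0 (1/B2)]) hconc hB2
  calc (p + (1 - p) * δ ^ (1 / B2)) ^ B2 < ((p + (1 - p) * y) ^ s) ^ B2 := h2
    _ = (p + (1 - p) * y) ^ B1 := by
        rw [← Real.rpow_mul hbase.le, hs, div_mul_cancel₀ _ hB2.ne']
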